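/- Let p, p', q, q' be four points of the plane such that the oriented segment from p to p' points to the segment qq', and q is to the right of the oriented line ℓ(p,p'). Let z be a point to the left of both ℓ(p,p') and ℓ(q,q') such that: (i) q is to the left of ℓ(z,p); (ii) the vectors p−z and p'−z are orthogonal, and the vectors q−z and q'−z are orthogonal. Then ‖p−z‖ − ‖q−z‖ < ‖p−q'‖ − ‖q−q'‖. -/

import Mathlib

set_option maxHeartbeats 1000000

noncomputable section

/-- Points of the plane with the Euclidean norm. -/
abbrev Pt : Type := EuclideanSpace ℝ (Fin 2)

/-- The closed disk with diameter the segment `pq`: center `(p+q)/2`, radius `‖p-q‖/2`. -/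
def disk (p q : Pt) : Set Pt := Metric.closedBall (midpoint ℝ p q) (dist p q / 2)


/-- 2D cross product of two vectors. -/
def cross2 (u v : Pt) : ℝ := u 0 * v 1 - u 1 * v 0

/-- The oriented segment from `p` to `q` points to the segment `rs`: `q` lies in the interior
of the triangle `p r s` and in the interior of the disk with diameter `rs`. -/
def pointsTo (p q r s : Pt) : Prop :=
  q ∈ interior (convexHull ℝ ({p, r, s} : Set Pt)) ∧ q ∈ interior (disk r s)


lemma key_ineq (x b c d : ℝ) (hb : 0 < b) (hc : 0 < c) (hd : 0 < d)
    (h1 : -(b*c) < x*d) (h2 : x*d < c*(b+d)) :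
    Real.sqrt (x^2+b^2) - c < Real.sqrt (x^2+(b+d)^2) - Real.sqrt (c^2+d^2) := by
  set A := Real.sqrt (x^2+(b+d)^2) with hA
  set B := Real.sqrt (x^2+b^2) with hB
  set C := Real.sqrt (c^2+d^2) with hC
  have hA2 : A^2 = x^2+(b+d)^2 := Real.sq_sqrt (by positivity)
  have hB2 : B^2 = x^2+b^2 := Real.sq_sqrt (by positivity)
  have hC2 : C^2 = c^2+d^2 := Real.sq_sqrt (by positivity)
  have hApos : 0 < A := Real.sqrt_pos.mpr (by positivity)
  have hBnn : 0 ≤ B := Real.sqrt_nonneg _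
  have hCpos : 0 < C := Real.sqrt_pos.mpr (by positivity)
  have hx2 : d^2*x^2 < c^2*(b+d)^2 := by nlinarith [mul_pos hc hd, mul_pos hb hc]
  have S1 : d*A < (b+d)*C := by
    have h : (d*A)^2 < ((b+d)*C)^2 := by nlinarith
    exact lt_of_pow_lt_pow_left₀ 2 (by positivity) h
  have S2 : d*B < b*C + 2*b*c + c*d := by
    have h : (d*B)^2 < (b*C + 2*b*c + c*d)^2 := by
      nlinarith [mul_pos hb hc, mul_pos hc hd, mul_pos (mul_pos hb hb) (mul_pos hc hCpos),
        mul_pos (mul_pos hb hc) (mul_pos hd hCpos)]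
    exact lt_of_pow_lt_pow_left₀ 2 (by positivity) h
  have key2 : d^2*(A+B) < (2*b*d+d^2)*(C+c) := by
    have t1 := mul_lt_mul_of_pos_left S1 hd
    have t2 := mul_lt_mul_of_pos_left S2 hd
    nlinarith
  have hABpos : 0 < A + B := by linarith
  have hCcpos : 0 < C + c := by linarith
  have e1 : A - B = (2*b*d+d^2)/(A+B) := by
    rw [eq_div_iff hABpos.ne']; linear_combination hA2 - hB2
  have e2 : C - c = d^2/(C+c) := by
    rw [eq_div_iff hCcpos.ne']; linear_combination hC2
  have final : C - c < A - B := by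
    rw [e1, e2, div_lt_div_iff₀ hCcpos hABpos]
    linarith
  linarith

lemma main_scalar (u1 u2 w1 w2 P1 P2 v1 v2 : ℝ)
    (H1 : u1*w1 + u2*w2 = 0)
    (H2 : 0 < u1*w2 - u2*w1)
    (H3 : 0 < P1*u2 - P2*u1)
    (H4 : P1*v1 + P2*v2 = 0)
    (H5 : 0 < P1*v2 - P2*v1)
    (H6 : v1^2 + v2^2 ≤ v1*(u1+w1) + v2*(u2+w2))
    (H8 : 0 < (u1-P1)*(w2-P2) - (u2-P2)*(w1-P1)) :
    Real.sqrt (P1^2+P2^2) - Real.sqrt (u1^2+u2^2) <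
      Real.sqrt ((P1-w1)^2+(P2-w2)^2) - Real.sqrt ((u1-w1)^2+(u2-w2)^2) := by
  have hu : 0 < u1^2+u2^2 := by
    nlinarith [sq_nonneg (u1*w2-u2*w1), sq_nonneg w1, sq_nonneg w2, sq_nonneg u1, sq_nonneg u2]
  have hv : 0 < v1^2+v2^2 := by
    nlinarith [sq_nonneg P1, sq_nonneg P2, sq_nonneg v1, sq_nonneg v2]
  have hvp : 0 < v1*(u1+w1)+v2*(u2+w2) := lt_of_lt_of_le hv H6
  have h4' : (v1*(u2+w2)-v2*(u1+w1))*(P1*v1+P2*v2) = 0 := by rw [H4]; exact mul_zero _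
  have hmul : 0 < (P1*(u2+w2) - P2*(u1+w1))*(v1^2+v2^2) := by
    nlinarith [mul_pos H5 hvp, h4']
  have hPcross : 0 < P1*(u2+w2) - P2*(u1+w1) := by
    rcases mul_pos_iff.mp hmul with ⟨h, _⟩ | ⟨_, h⟩
    · exact h
    · linarith
  have h0 : (u1*w1+u2*w2)*(P1*u2-P2*u1) = 0 := by rw [H1]; exact zero_mul _
  have h1' : -((P1*u2-P2*u1)*(u1^2+u2^2)) < (P1*u1+P2*u2)*(u1*w2-u2*w1) := by
    nlinarith [mul_pos hu hPcross, h0]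
  have h2' : (P1*u1+P2*u2)*(u1*w2-u2*w1) < (u1^2+u2^2)*((P1*u2-P2*u1)+(u1*w2-u2*w1)) := by
    nlinarith [mul_pos hu H8, h0]
  have KEY := key_ineq (P1*u1+P2*u2) (P1*u2-P2*u1) (u1^2+u2^2) (u1*w2-u2*w1) H3 hu H2 h1' h2'
  have q1 : (P1*u1+P2*u2)^2 + (P1*u2-P2*u1)^2 = (u1^2+u2^2)*(P1^2+P2^2) := by ring
  have q2 : (P1*u1+P2*u2)^2 + ((P1*u2-P2*u1)+(u1*w2-u2*w1))^2
      = (u1^2+u2^2)*((P1-w1)^2+(P2-w2)^2) := by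
    linear_combination (2*(P1*u1+P2*u2) - (u1*w1+u2*w2))*H1
  have q3 : (u1^2+u2^2)^2 + (u1*w2-u2*w1)^2 = (u1^2+u2^2)*((u1-w1)^2+(u2-w2)^2) := by
    linear_combination (2*(u1^2+u2^2) - (u1*w1+u2*w2))*H1
  rw [q1, q2, q3, Real.sqrt_mul hu.le, Real.sqrt_mul hu.le, Real.sqrt_mul hu.le] at KEY
  have hsU : Real.sqrt (u1^2+u2^2) * Real.sqrt (u1^2+u2^2) = u1^2+u2^2 :=
    Real.mul_self_sqrt hu.le
  have hsUpos : 0 < Real.sqrt (u1^2+u2^2) := Real.sqrt_pos.mpr hu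
  rw [← mul_lt_mul_iff_right₀ hsUpos]
  rw [mul_sub, mul_sub, hsU]
  exact KEY

/-- Lemma 6 of the paper. -/
theorem stmt8 (p p' q q' z : Pt)
    (hpt : pointsTo p p' q q')
    (hqr : cross2 (p' - p) (q - p) < 0)
    (hz1 : 0 < cross2 (p' - p) (z - p))
    (hz2 : 0 < cross2 (q' - q) (z - q))
    (hql : 0 < cross2 (p - z) (q - z))
    (ho1 : inner ℝ (p - z) (p' - z) = (0 : ℝ))
    (ho2 : inner ℝ (q - z) (q' - z) = (0 : ℝ)) :
    dist p z - dist q z < dist p q' - dist q q' := by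
  obtain ⟨htri, hdisk⟩ := hpt
  -- basic converters
  have sub_apply : ∀ (a b : Pt) (i : Fin 2), (a - b) i = a i - b i := fun a b i => rfl
  have dist2 : ∀ a b : Pt, dist a b = Real.sqrt ((a 0 - b 0)^2 + (a 1 - b 1)^2) := by
    intro a b
    rw [EuclideanSpace.dist_eq, Fin.sum_univ_two]
    simp [Real.dist_eq, sq_abs]
  have inner2 : ∀ a b : Pt, (inner ℝ a b : ℝ) = a 0 * b 0 + a 1 * b 1 := by
    intro a b
    rw [PiLp.inner_apply, Fin.sum_univ_two]
    simp [RCLike.inner_apply, mul_comm]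
  have hm : ∀ i : Fin 2, midpoint ℝ q q' i = (q i + q' i)/2 := by
    intro i
    rw [midpoint_eq_smul_add]
    simp [PiLp.smul_apply, PiLp.add_apply]
    ring
  -- scalar hypotheses
  have H1 : (q 0 - z 0)*(q' 0 - z 0) + (q 1 - z 1)*(q' 1 - z 1) = 0 := by
    rw [inner2] at ho2; simp only [sub_apply] at ho2; linarith
  have H4 : (p 0 - z 0)*(p' 0 - z 0) + (p 1 - z 1)*(p' 1 - z 1) = 0 := by
    rw [inner2] at ho1; simp only [sub_apply] at ho1; linarith
  simp only [cross2, sub_apply] at hqr hz1 hz2 hql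
  have H2 : 0 < (q 0 - z 0)*(q' 1 - z 1) - (q 1 - z 1)*(q' 0 - z 0) := by linarith [hz2]
  have H3 : 0 < (p 0 - z 0)*(q 1 - z 1) - (p 1 - z 1)*(q 0 - z 0) := by linarith [hql]
  have H5 : 0 < (p 0 - z 0)*(p' 1 - z 1) - (p 1 - z 1)*(p' 0 - z 0) := by linarith [hz1]
  -- disk condition
  have hdm : dist p' (midpoint ℝ q q') ≤ dist q q' / 2 := by
    have := interior_subset hdisk
    simpa [disk, Metric.mem_closedBall] using this
  have hdm2 : (dist p' (midpoint ℝ q q'))^2 ≤ (dist q q' / 2)^2 :=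
    pow_le_pow_left₀ dist_nonneg hdm 2
  have H6 : (p' 0 - z 0)^2 + (p' 1 - z 1)^2 ≤
      (p' 0 - z 0)*((q 0 - z 0)+(q' 0 - z 0)) + (p' 1 - z 1)*((q 1 - z 1)+(q' 1 - z 1)) := by
    rw [dist2, dist2] at hdm2
    rw [Real.sq_sqrt (by positivity), div_pow, Real.sq_sqrt (by positivity), hm 0, hm 1] at hdm2
    nlinarith [hdm2, H1]
  -- triangle condition
  have hsub : p' ∈ convexHull ℝ ({p, q, q'} : Set Pt) := interior_subset htri
  rw [show ({p, q, q'} : Set Pt) = insert p {q, q'} from rfl,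
    convexHull_insert ⟨q, by simp⟩, mem_convexJoin] at hsub
  obtain ⟨x, hx, y, hy, hseg⟩ := hsub
  rw [Set.mem_singleton_iff] at hx
  rw [hx] at hseg
  rw [convexHull_pair] at hy
  obtain ⟨e, f, he, hf, hef, hy'⟩ := hy
  obtain ⟨a, b, ha, hb, hab, hp'⟩ := hseg
  have hco : ∀ i : Fin 2, p' i = a * p i + b*e * q i + b*f * q' i := by
    intro i
    rw [← hp', ← hy']
    simp [PiLp.smul_apply, PiLp.add_apply]
    ring
  have H8 : 0 < ((q 0 - z 0)-(p 0 - z 0))*((q' 1 - z 1)-(p 1 - z 1))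
      - ((q 1 - z 1)-(p 1 - z 1))*((q' 0 - z 0)-(p 0 - z 0)) := by
    have ha' : a = 1 - b*e - b*f := by
      have : b*e + b*f = b := by linear_combination b*hef
      linarith
    have e8 : (q 0 - p 0)*(p' 1 - p 1) - (q 1 - p 1)*(p' 0 - p 0)
        = (b*f)*((q 0 - p 0)*(q' 1 - p 1) - (q 1 - p 1)*(q' 0 - p 0)) := by
      rw [hco 0, hco 1, ha']; ring
    have hpos : 0 < (b*f)*((q 0 - p 0)*(q' 1 - p 1) - (q 1 - p 1)*(q' 0 - p 0)) := by
      rw [← e8]; linarith [hqr]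
    have hK : 0 < (q 0 - p 0)*(q' 1 - p 1) - (q 1 - p 1)*(q' 0 - p 0) := by
      by_contra hK
      push_neg at hK
      nlinarith [mul_nonneg (mul_nonneg hb hf) (neg_nonneg.mpr hK)]
    linarith [hK]
  -- apply scalar lemma
  have M := main_scalar (q 0 - z 0) (q 1 - z 1) (q' 0 - z 0) (q' 1 - z 1)
    (p 0 - z 0) (p 1 - z 1) (p' 0 - z 0) (p' 1 - z 1) H1 H2 H3 H4 H5 H6 H8
  have r1 : ((p 0 - z 0) - (q' 0 - z 0))^2 + ((p 1 - z 1) - (q' 1 - z 1))^2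
      = (p 0 - q' 0)^2 + (p 1 - q' 1)^2 := by ring
  have r2 : ((q 0 - z 0) - (q' 0 - z 0))^2 + ((q 1 - z 1) - (q' 1 - z 1))^2
      = (q 0 - q' 0)^2 + (q 1 - q' 1)^2 := by ring
  rw [r1, r2] at M
  rw [dist2 p z, dist2 q z, dist2 p q', dist2 q q']
  exact M
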